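/- Let K ≥ 1 be an integer, let P > 1 be a real number, let α_1,…,α_K be reals with 0 < α_1 ≤ ⋯ ≤ α_K, and let ρ̃_1,…,ρ̃_K be nonnegative reals satisfying ∑_{i=1}^{k} ρ̃_i ≤ max{0, α_k·log₂ P − k} for all k ∈ {1,…,K}. Then there exist nonnegative reals ρ_1,…,ρ_K such that ∑_{i=1}^{k} ρ_i ≤ α_k for all k ∈ {1,…,K} and ρ̃_k ≤ max{0, ρ_k·log₂ P − 1} for every k ∈ {1,…,K}. -/

import Mathlib

/-- Constant-gap step (Corollary 4): any rate tuple satisfying the explicit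
cumulative constraints ∑ ρ̃_i ≤ (α_k log₂P − k)⁺ is supported by a GDoF
assignment ρ in the polyhedral GDoF region with per-layer gap of 1 bit. -/
theorem stmt14 (K : ℕ) (hK : 1 ≤ K) (P : ℝ) (hP : 1 < P)
    (α ρt : ℕ → ℝ) (hα0 : 0 < α 1)
    (hαmono : ∀ k ∈ Finset.Icc 1 (K - 1), α k ≤ α (k + 1))
    (hρt : ∀ k ∈ Finset.Icc 1 K, 0 ≤ ρt k)
    (hsum : ∀ k ∈ Finset.Icc 1 K,
      ∑ i ∈ Finset.Icc 1 k, ρt i ≤ max 0 (α k * Real.logb 2 P - k)) :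
    ∃ ρ : ℕ → ℝ,
      (∀ k ∈ Finset.Icc 1 K, 0 ≤ ρ k) ∧
      (∀ k ∈ Finset.Icc 1 K, ∑ i ∈ Finset.Icc 1 k, ρ i ≤ α k) ∧
      (∀ k ∈ Finset.Icc 1 K, ρt k ≤ max 0 (ρ k * Real.logb 2 P - 1)) := by
  set L : ℝ := Real.logb 2 P with hL
  have hLpos : 0 < L := Real.logb_pos one_lt_two hP
  -- α is at least α 1 on [1, K]
  have hα1 : ∀ k, 1 ≤ k → k ≤ K → α 1 ≤ α k := by
    intro k hk1 hkK
    induction k with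
    | zero => omega
    | succ n ih =>
      rcases Nat.eq_or_lt_of_le hk1 with h | h
      · simp [← h]
      · have hn1 : 1 ≤ n := by omega
        have hnK : n ≤ K := by omega
        have := hαmono n (Finset.mem_Icc.mpr ⟨hn1, by omega⟩)
        exact le_trans (ih hn1 hnK) this
  refine ⟨fun k => if ρt k = 0 then 0 else (ρt k + 1) / L, ?_, ?_, ?_⟩
  · intro k hk
    rcases Finset.mem_Icc.mp hk with ⟨hk1, hkK⟩
    by_cases h : ρt k = 0
    · simp [h]
    · simp only [h, if_false]
      have := hρt k hk
      positivity
  · intro k hk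
    rcases Finset.mem_Icc.mp hk with ⟨hk1, hkK⟩
    rcases le_or_gt ((k : ℝ)) (α k * L) with h | h
    · -- pointwise bound: ρ i ≤ (ρt i + 1)/L
      have hbound : ∑ i ∈ Finset.Icc 1 k, (if ρt i = 0 then (0:ℝ) else (ρt i + 1) / L)
          ≤ ∑ i ∈ Finset.Icc 1 k, (ρt i + 1) / L := by
        apply Finset.sum_le_sum
        intro i hi
        rcases Finset.mem_Icc.mp hi with ⟨hi1, hik⟩
        have hρi := hρt i (Finset.mem_Icc.mpr ⟨hi1, by omega⟩)
        by_cases h' : ρt i = 0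
        · simp [h']
          positivity
        · simp [h']
      have hsum' := hsum k hk
      rw [max_eq_right (by linarith)] at hsum'
      calc ∑ i ∈ Finset.Icc 1 k, (if ρt i = 0 then (0:ℝ) else (ρt i + 1) / L)
          ≤ ∑ i ∈ Finset.Icc 1 k, (ρt i + 1) / L := hbound
        _ = (∑ i ∈ Finset.Icc 1 k, ρt i + k) / L := by
            rw [← Finset.sum_div, Finset.sum_add_distrib, Finset.sum_const, Nat.card_Icc]
            simp
        _ ≤ (α k * L) / L := by
            apply div_le_div_of_nonneg_right ?_ (le_of_lt hLpos) |>.trans_eq rfl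
            linarith
        _ = α k := by field_simp
    · -- all ρt i = 0 on [1,k]
      have hsum' := hsum k hk
      rw [max_eq_left (by linarith)] at hsum'
      have hall : ∀ i ∈ Finset.Icc 1 k, ρt i = 0 := by
        intro i hi
        rcases Finset.mem_Icc.mp hi with ⟨hi1, hik⟩
        have hρi := hρt i (Finset.mem_Icc.mpr ⟨hi1, by omega⟩)
        have : ∀ j ∈ Finset.Icc 1 k, 0 ≤ ρt j := by
          intro j hj
          rcases Finset.mem_Icc.mp hj with ⟨hj1, hjk⟩
          exact hρt j (Finset.mem_Icc.mpr ⟨hj1, by omega⟩)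
        have := (Finset.sum_eq_zero_iff_of_nonneg this).mp (le_antisymm hsum' (Finset.sum_nonneg this))
        exact this i hi
      have : ∑ i ∈ Finset.Icc 1 k, (if ρt i = 0 then (0:ℝ) else (ρt i + 1) / L) = 0 := by
        apply Finset.sum_eq_zero
        intro i hi
        simp [hall i hi]
      rw [this]
      exact le_of_lt (lt_of_lt_of_le hα0 (hα1 k hk1 hkK))
  · intro k hk
    by_cases h : ρt k = 0
    · simp [h, le_max_iff]
    · simp only [h, if_false]
      have : (ρt k + 1) / L * L - 1 = ρt k := by field_simp; ring
      rw [this]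
      exact le_max_right _ _
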